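/- Let ε, a, b, ρ, E > 0 and suppose ℳ_ε(v) = a e^{−b|v|²}/(1+εa e^{−b|v|²}) satisfies ∫_{ℝ³} ℳ_ε dv = ρ and ∫ |v|² ℳ_ε dv = 3ρE, and assume additionally εa ≤ 2^{5/2}/3. Then 3b/5 ≤ 1/(2E) ≤ 4b/3 and (3/5)^{5/2} a ≤ ρ/(2πE)^{3/2} ≤ (4/3)^{3/2} a. -/

import Mathlib

open MeasureTheory Real

noncomputable section

abbrev E3 := EuclideanSpace ℝ (Fin 3)

/-- Maxwellian `M(v) = a e^{-b|v|²}`. -/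
def Mw (a b : ℝ) (v : E3) : ℝ := a * exp (-b * ‖v‖ ^ 2)

/-- Fermi–Dirac statistics `ℳ_ε = M/(1+εM)`. -/
def FD (ε a b : ℝ) (v : E3) : ℝ := Mw a b v / (1 + ε * Mw a b v)


lemma gauss_int {β : ℝ} (hβ : 0 < β) :
    ∫ v : E3, exp (-β * ‖v‖ ^ 2) = (π / β) ^ ((3:ℝ)/2) := by
  rw [GaussianFourier.integral_rexp_neg_mul_sq_norm hβ]
  norm_num [finrank_euclideanSpace_fin]

lemma polar3 (f : ℝ → ℝ) :
    ∫ v : E3, f ‖v‖ = (3 : ℝ) * (volume (Metric.ball (0:E3) 1)).toReal *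
      ∫ y in Set.Ioi (0:ℝ), y ^ 2 * f y := by
  rw [MeasureTheory.integral_fun_norm_addHaar (volume : Measure E3) f]
  simp [finrank_euclideanSpace_fin, smul_eq_mul, mul_assoc]
  left
  simp [measureReal_def]

lemma integrable_gauss {β : ℝ} (hβ : 0 < β) :
    Integrable (fun v : E3 => exp (-β * ‖v‖ ^ 2)) := by
  have h := (GaussianFourier.integrable_cexp_neg_mul_sq_norm_add
    (show 0 < (β:ℂ).re by simpa using hβ) 0 (0 : E3)).norm
  have : ∀ v : E3, ((‖v‖:ℂ) ^ 2).re = (‖v‖^2 : ℝ) := by intro v; norm_cast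
  simpa [Complex.norm_exp, this] using h

lemma sq_exp_le {β s : ℝ} (hβ : 0 < β) (hs : 0 ≤ s) :
    s * exp (-β * s) ≤ (2/β) * exp (-(β/2) * s) := by
  rw [show -β * s = -(β/2) * s + -(β/2) * s by ring, exp_add, ← mul_assoc]
  have h1 : s * exp (-(β/2) * s) ≤ 2/β := by
    rcases eq_or_lt_of_le hs with h | h
    · rw [← h]; simp; positivity
    · have hx : 0 < (β/2) * s := by positivity
      have h2 : (β/2) * s ≤ exp ((β/2) * s) := le_trans (by linarith [exp_pos ((β/2)*s)])
        (Real.add_one_le_exp _)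
      rw [show -(β/2) * s = -((β/2) * s) by ring, exp_neg]
      have h3 : (exp ((β/2)*s))⁻¹ ≤ ((β/2)*s)⁻¹ := by
        apply inv_anti₀ hx h2
      calc s * (exp ((β/2)*s))⁻¹ ≤ s * ((β/2)*s)⁻¹ := by
            exact mul_le_mul_of_nonneg_left h3 hs
        _ = 2/β := by field_simp
  exact mul_le_mul_of_nonneg_right h1 (exp_pos _).le

lemma integrable_sq_gauss {β : ℝ} (hβ : 0 < β) :
    Integrable (fun v : E3 => ‖v‖ ^ 2 * exp (-β * ‖v‖ ^ 2)) := by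
  refine Integrable.mono' ((integrable_gauss (by positivity : 0 < β/2)).const_mul (2/β))
    ?_ (Filter.Eventually.of_forall fun v => ?_)
  · exact (Continuous.mul (by fun_prop) (by fun_prop)).aestronglyMeasurable
  · rw [Real.norm_eq_abs, abs_of_nonneg (by positivity)]
    exact sq_exp_le hβ (by positivity)

lemma oneD_ratio {β : ℝ} (hβ : 0 < β) :
    ∫ y in Set.Ioi (0:ℝ), y ^ 2 * (y ^ 2 * exp (-β * y ^ 2))
      = (3/(2*β)) * ∫ y in Set.Ioi (0:ℝ), y ^ 2 * exp (-β * y ^ 2) := by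
  have two_pos' : (0:ℝ) < 2 := two_pos
  have e4 : ∫ y in Set.Ioi (0:ℝ), y ^ 2 * (y ^ 2 * exp (-β * y ^ 2))
      = β ^ (-(5:ℝ)/2) * (1/2) * Real.Gamma (5/2) := by
    rw [show (-(5:ℝ)/2) = -((4:ℝ)+1)/2 by norm_num,
        show ((5:ℝ)/2) = ((4:ℝ)+1)/2 by norm_num,
      ← integral_rpow_mul_exp_neg_mul_rpow two_pos' (by norm_num : (-1:ℝ) < 4) hβ]
    refine setIntegral_congr_fun measurableSet_Ioi (fun x hx => ?_)
    rw [show (4:ℝ) = ((4:ℕ):ℝ) by norm_num, rpow_natCast,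
       show (2:ℝ) = ((2:ℕ):ℝ) by norm_num, rpow_natCast]
    ring
  have e2 : ∫ y in Set.Ioi (0:ℝ), y ^ 2 * exp (-β * y ^ 2)
      = β ^ (-(3:ℝ)/2) * (1/2) * Real.Gamma (3/2) := by
    rw [show (-(3:ℝ)/2) = -((2:ℝ)+1)/2 by norm_num,
        show ((3:ℝ)/2) = ((2:ℝ)+1)/2 by norm_num,
      ← integral_rpow_mul_exp_neg_mul_rpow two_pos' (by norm_num : (-1:ℝ) < 2) hβ]
    refine setIntegral_congr_fun measurableSet_Ioi (fun x hx => ?_)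
    rw [show (2:ℝ) = ((2:ℕ):ℝ) by norm_num, rpow_natCast]
  rw [e4, e2]
  have hg : Real.Gamma (5/2) = (3/2) * Real.Gamma (3/2) := by
    rw [show (5:ℝ)/2 = 3/2 + 1 by norm_num, Real.Gamma_add_one (by norm_num)]
  have hpow : β ^ (-(5:ℝ)/2) = β⁻¹ * β ^ (-(3:ℝ)/2) := by
    rw [← rpow_neg_one β, ← rpow_add hβ]; norm_num
  rw [hg, hpow]; field_simp

lemma int_sq_gauss {β : ℝ} (hβ : 0 < β) :
    ∫ v : E3, ‖v‖ ^ 2 * exp (-β * ‖v‖ ^ 2) = (3/(2*β)) * (π/β) ^ ((3:ℝ)/2) := by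
  have hp := polar3 (fun y => y ^ 2 * exp (-β * y ^ 2))
  have hp0 := polar3 (fun y => exp (-β * y ^ 2))
  rw [gauss_int hβ] at hp0
  rw [show (fun v : E3 => ‖v‖ ^ 2 * exp (-β * ‖v‖ ^ 2))
      = (fun v : E3 => (fun y => y ^ 2 * exp (-β * y ^ 2)) ‖v‖) from rfl] at *
  rw [hp, oneD_ratio hβ, hp0]
  ring

section FDfacts
variable {ε a b : ℝ} (hε : 0 < ε) (ha : 0 < a) (hb : 0 < b)
include hε ha hb

lemma Mw_pos (v : E3) : 0 < Mw a b v := mul_pos ha (exp_pos _)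

lemma FD_nonneg (v : E3) : 0 ≤ FD ε a b v := by
  have h := Mw_pos hε ha hb v
  have : 0 < 1 + ε * Mw a b v := by nlinarith
  exact div_nonneg h.le this.le

lemma FD_le_Mw (v : E3) : FD ε a b v ≤ Mw a b v := by
  have h := Mw_pos hε ha hb v
  exact div_le_self h.le (by nlinarith)

lemma continuous_Mw : Continuous (Mw a b) := by unfold Mw; fun_prop

lemma continuous_FD : Continuous (FD ε a b) := by
  apply (continuous_Mw hε ha hb (a := a) (b := b)).div (by unfold Mw; fun_prop)
  intro v
  have h := Mw_pos hε ha hb v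
  nlinarith

lemma integrable_FD : Integrable (FD ε a b) := by
  refine Integrable.mono' ((integrable_gauss hb).const_mul a)
    (continuous_FD hε ha hb).aestronglyMeasurable
    (Filter.Eventually.of_forall fun v => ?_)
  rw [Real.norm_eq_abs, abs_of_nonneg (FD_nonneg hε ha hb v)]
  exact FD_le_Mw hε ha hb v

lemma integrable_sq_FD : Integrable (fun v : E3 => ‖v‖ ^ 2 * FD ε a b v) := by
  refine Integrable.mono' ((integrable_sq_gauss hb).const_mul a)
    (Continuous.aestronglyMeasurable ((continuous_norm.pow 2).mul (continuous_FD hε ha hb)))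
    (Filter.Eventually.of_forall fun v => ?_)
  rw [Real.norm_eq_abs, abs_of_nonneg (mul_nonneg (by positivity) (FD_nonneg hε ha hb v))]
  have h := FD_le_Mw hε ha hb (ε := ε) v
  calc ‖v‖^2 * FD ε a b v ≤ ‖v‖^2 * Mw a b v := mul_le_mul_of_nonneg_left h (by positivity)
    _ = a * (‖v‖^2 * exp (-b*‖v‖^2)) := by unfold Mw; ring

/-- the supporting-line pointwise bound -/
lemma support_line (m : ℝ) (hm : 0 < m) (v : E3) :
    (1/(1+ε*m) + ε*m/(1+ε*m)^2) * (a * exp (-b * ‖v‖ ^ 2))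
      - ε/(1+ε*m)^2 * (a^2 * exp (-(2*b) * ‖v‖ ^ 2)) ≤ FD ε a b v := by
  have hX : exp (-(2*b) * ‖v‖ ^ 2) = exp (-b * ‖v‖ ^ 2) * exp (-b * ‖v‖ ^ 2) := by
    rw [← Real.exp_add]; ring_nf
  set M := Mw a b v with hM
  have hMpos : 0 < M := Mw_pos hε ha hb v
  have hMw : a * exp (-b * ‖v‖ ^ 2) = M := rfl
  have hM2 : a^2 * exp (-(2*b) * ‖v‖ ^ 2) = M^2 := by rw [hX, hM]; unfold Mw; ring
  rw [hMw, hM2]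
  set u := ε * M with hu
  set w := ε * m with hw
  have hupos : 0 < u := by positivity
  have hwpos : 0 < w := by positivity
  have h1u : 0 < 1 + u := by linarith
  have h1w : 0 < 1 + w := by linarith
  have hFD : FD ε a b v = M / (1 + u) := rfl
  rw [hFD]
  have key : M/(1+u) - ((1/(1+w) + w/(1+w)^2) * M - ε/(1+w)^2 * M^2)
      = M * (u - w)^2 / ((1+u)*(1+w)^2) := by
    field_simp
    ring
  nlinarith [mul_nonneg (mul_nonneg hMpos.le (sq_nonneg (u-w)))
      (le_of_lt (mul_pos h1u (pow_pos h1w 2))), div_nonneg (mul_nonneg hMpos.le (sq_nonneg (u-w))) (le_of_lt (mul_pos h1u (pow_pos h1w 2)))]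
end FDfacts

section more
variable {ε a b : ℝ} (hε : 0 < ε) (ha : 0 < a) (hb : 0 < b)
include hε ha hb

lemma pow_half_id : (π/(2*b))^((3:ℝ)/2) = (2:ℝ)^(-((3:ℝ)/2)) * (π/b)^((3:ℝ)/2) := by
  have h : π/(2*b) = (2:ℝ)⁻¹ * (π/b) := by ring
  rw [h, mul_rpow (by norm_num) (by positivity), inv_rpow (by norm_num),
    ← rpow_neg (by norm_num)]

lemma mass_upper : ∫ v, FD ε a b v ≤ a * (π/b)^((3:ℝ)/2) := by
  have h := integral_mono (μ := (volume : Measure E3)) (integrable_FD hε ha hb)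
    ((integrable_gauss hb).const_mul a) (fun v => FD_le_Mw hε ha hb v)
  rwa [MeasureTheory.integral_const_mul, gauss_int hb] at h

lemma energy_upper : ∫ v, ‖v‖^2 * FD ε a b v ≤ (3/(2*b)) * (a * (π/b)^((3:ℝ)/2)) := by
  have hpt : ∀ v : E3, ‖v‖^2 * FD ε a b v ≤ a * (‖v‖^2 * exp (-b * ‖v‖^2)) := by
    intro v
    calc ‖v‖^2 * FD ε a b v ≤ ‖v‖^2 * Mw a b v :=
          mul_le_mul_of_nonneg_left (FD_le_Mw hε ha hb v) (by positivity)
      _ = a * (‖v‖^2 * exp (-b * ‖v‖^2)) := by unfold Mw; ring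
  have h := integral_mono (μ := (volume : Measure E3)) (integrable_sq_FD hε ha hb)
    ((integrable_sq_gauss hb).const_mul a) hpt
  rw [MeasureTheory.integral_const_mul, int_sq_gauss hb] at h
  linarith

lemma jensen_mass :
    a * (π/b)^((3:ℝ)/2) / (1 + ε * ((2:ℝ)^(-((3:ℝ)/2)) * a)) ≤ ∫ v, FD ε a b v := by
  set s : ℝ := (2:ℝ)^(-((3:ℝ)/2)) with hs
  have hs0 : 0 < s := by positivity
  set m : ℝ := s * a with hm
  have hm0 : 0 < m := by positivity
  set w : ℝ := ε * m with hw
  have hw0 : 0 < w := by positivity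
  have h1w : 0 < 1 + w := by linarith
  set c1 : ℝ := (1/(1+w) + w/(1+w)^2) * a with hc1
  set c2 : ℝ := ε/(1+w)^2 * a^2 with hc2
  have hpt : ∀ v : E3,
      c1 * exp (-b * ‖v‖^2) - c2 * exp (-(2*b) * ‖v‖^2) ≤ FD ε a b v := by
    intro v
    have h := support_line hε ha hb m hm0 v
    calc c1 * exp (-b * ‖v‖^2) - c2 * exp (-(2*b) * ‖v‖^2)
        = (1/(1+ε*m) + ε*m/(1+ε*m)^2) * (a * exp (-b * ‖v‖ ^ 2))
          - ε/(1+ε*m)^2 * (a^2 * exp (-(2*b) * ‖v‖ ^ 2)) := by rw [hc1, hc2, ← hw]; ring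
      _ ≤ FD ε a b v := h
  have hint : ∫ v : E3, (c1 * exp (-b * ‖v‖^2) - c2 * exp (-(2*b) * ‖v‖^2))
      = c1 * (π/b)^((3:ℝ)/2) - c2 * ((π/(2*b))^((3:ℝ)/2)) := by
    rw [integral_sub ((integrable_gauss hb).const_mul c1)
      ((integrable_gauss (by positivity : (0:ℝ) < 2*b)).const_mul c2),
      MeasureTheory.integral_const_mul, MeasureTheory.integral_const_mul, gauss_int hb,
      gauss_int (by positivity : (0:ℝ) < 2*b)]
  have hmono := integral_mono (μ := (volume : Measure E3))
    (((integrable_gauss hb).const_mul c1).sub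
      ((integrable_gauss (by positivity : (0:ℝ) < 2*b)).const_mul c2))
    (integrable_FD hε ha hb) hpt
  simp only [Pi.sub_apply] at hmono
  rw [hint, pow_half_id hε ha hb, ← hs] at hmono
  refine le_trans (le_of_eq ?_) hmono
  rw [hc1, hc2, hw, hm]
  field_simp
  ring
end more

section energy
variable {ε a b : ℝ} (hε : 0 < ε) (ha : 0 < a) (hb : 0 < b)
include hε ha hb

lemma jensen_energy :
    (3/(2*b)) * (a * (π/b)^((3:ℝ)/2)) / (1 + ε * ((2:ℝ)^(-((5:ℝ)/2)) * a))
      ≤ ∫ v, ‖v‖^2 * FD ε a b v := by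
  have hs52 : (2:ℝ)^(-((5:ℝ)/2)) = 2⁻¹ * (2:ℝ)^(-((3:ℝ)/2)) := by
    rw [show -((5:ℝ)/2) = (-1) + -((3:ℝ)/2) by norm_num, rpow_add (by norm_num), rpow_neg_one]
  set s : ℝ := (2:ℝ)^(-((3:ℝ)/2)) with hs
  have hs0 : 0 < s := by positivity
  set m : ℝ := (2⁻¹ * s) * a with hm
  have hm0 : 0 < m := by positivity
  set w : ℝ := ε * m with hw
  have hw0 : 0 < w := by positivity
  have h1w : 0 < 1 + w := by linarith
  set c1 : ℝ := (1/(1+w) + w/(1+w)^2) * a with hc1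
  set c2 : ℝ := ε/(1+w)^2 * a^2 with hc2
  have hpt : ∀ v : E3,
      c1 * (‖v‖^2 * exp (-b * ‖v‖^2)) - c2 * (‖v‖^2 * exp (-(2*b) * ‖v‖^2))
        ≤ ‖v‖^2 * FD ε a b v := by
    intro v
    have h := support_line hε ha hb m hm0 v
    have h2 := mul_le_mul_of_nonneg_left h (by positivity : (0:ℝ) ≤ ‖v‖^2)
    calc c1 * (‖v‖^2 * exp (-b * ‖v‖^2)) - c2 * (‖v‖^2 * exp (-(2*b) * ‖v‖^2))
        = ‖v‖^2 * ((1/(1+ε*m) + ε*m/(1+ε*m)^2) * (a * exp (-b * ‖v‖ ^ 2))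
          - ε/(1+ε*m)^2 * (a^2 * exp (-(2*b) * ‖v‖ ^ 2))) := by rw [hc1, hc2, ← hw]; ring
      _ ≤ ‖v‖^2 * FD ε a b v := h2
  have hint : ∫ v : E3, (c1 * (‖v‖^2 * exp (-b * ‖v‖^2)) - c2 * (‖v‖^2 * exp (-(2*b) * ‖v‖^2)))
      = c1 * ((3/(2*b)) * (π/b)^((3:ℝ)/2)) - c2 * ((3/(2*(2*b))) * (π/(2*b))^((3:ℝ)/2)) := by
    rw [integral_sub ((integrable_sq_gauss hb).const_mul c1)
      ((integrable_sq_gauss (by positivity : (0:ℝ) < 2*b)).const_mul c2),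
      MeasureTheory.integral_const_mul, MeasureTheory.integral_const_mul, int_sq_gauss hb,
      int_sq_gauss (by positivity : (0:ℝ) < 2*b)]
  have hmono := integral_mono (μ := (volume : Measure E3))
    (((integrable_sq_gauss hb).const_mul c1).sub
      ((integrable_sq_gauss (by positivity : (0:ℝ) < 2*b)).const_mul c2))
    (integrable_sq_FD hε ha hb) hpt
  simp only [Pi.sub_apply] at hmono
  rw [hint, pow_half_id hε ha hb, ← hs] at hmono
  rw [hs52]
  refine le_trans (le_of_eq ?_) hmono
  rw [hc1, hc2, hw, hm]
  field_simp
  ring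
end energy

set_option maxHeartbeats 1000000 in
/-- Under the smallness condition `εa ≤ 2^{5/2}/3`, the parameters of the
Fermi–Dirac statistics with mass `ρ` and energy `3ρE` satisfy
`3b/5 ≤ 1/(2E) ≤ 4b/3` and `(3/5)^{5/2} a ≤ ρ/(2πE)^{3/2} ≤ (4/3)^{3/2} a`. -/
theorem stmt16 (ε a b ρ E : ℝ) (hε : 0 < ε) (ha : 0 < a) (hb : 0 < b)
    (hρ : 0 < ρ) (hE : 0 < E)
    (hmass : (∫ v, FD ε a b v) = ρ)
    (henergy : (∫ v, ‖v‖ ^ 2 * FD ε a b v) = 3 * ρ * E)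
    (hεa : ε * a ≤ 2 ^ ((5 : ℝ) / 2) / 3) :
    (3 * b / 5 ≤ 1 / (2 * E) ∧ 1 / (2 * E) ≤ 4 * b / 3) ∧
    ((3 / 5 : ℝ) ^ ((5 : ℝ) / 2) * a ≤ ρ / (2 * π * E) ^ ((3 : ℝ) / 2) ∧
      ρ / (2 * π * E) ^ ((3 : ℝ) / 2) ≤ (4 / 3 : ℝ) ^ ((3 : ℝ) / 2) * a) := by
  have hπ : 0 < π := pi_pos
  set T : ℝ := (π/b)^((3:ℝ)/2) with hT
  have hT0 : 0 < T := rpow_pos_of_pos (by positivity) _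
  -- smallness
  have hs3 : ε * ((2:ℝ)^(-((3:ℝ)/2)) * a) ≤ 2/3 := by
    have h2 : (2:ℝ)^((5:ℝ)/2) * (2:ℝ)^(-((3:ℝ)/2)) = 2 := by
      rw [← rpow_add (by norm_num)]; norm_num
    have h3 : (0:ℝ) ≤ (2:ℝ)^(-((3:ℝ)/2)) := by positivity
    calc ε * ((2:ℝ)^(-((3:ℝ)/2)) * a) = (ε*a) * (2:ℝ)^(-((3:ℝ)/2)) := by ring
      _ ≤ (2 ^ ((5 : ℝ) / 2) / 3) * (2:ℝ)^(-((3:ℝ)/2)) := mul_le_mul_of_nonneg_right hεa h3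
      _ = 2/3 := by rw [div_mul_eq_mul_div, h2]
  have hs5 : ε * ((2:ℝ)^(-((5:ℝ)/2)) * a) ≤ 1/3 := by
    have h2 : (2:ℝ)^((5:ℝ)/2) * (2:ℝ)^(-((5:ℝ)/2)) = 1 := by
      rw [← rpow_add (by norm_num)]; norm_num
    have h3 : (0:ℝ) ≤ (2:ℝ)^(-((5:ℝ)/2)) := by positivity
    calc ε * ((2:ℝ)^(-((5:ℝ)/2)) * a) = (ε*a) * (2:ℝ)^(-((5:ℝ)/2)) := by ring
      _ ≤ (2 ^ ((5 : ℝ) / 2) / 3) * (2:ℝ)^(-((5:ℝ)/2)) := mul_le_mul_of_nonneg_right hεa h3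
      _ = 1/3 := by rw [div_mul_eq_mul_div, h2]
  -- the four integral estimates
  have hF1 : ρ ≤ a*T := by rw [← hmass]; exact mass_upper hε ha hb
  have hF2 : (3/5)*(a*T) ≤ ρ := by
    have hj := jensen_mass hε ha hb
    rw [hmass] at hj
    refine le_trans ?_ hj
    rw [le_div_iff₀ (by positivity)]
    nlinarith [mul_pos ha hT0, mul_pos hε (mul_pos (show (0:ℝ) < (2:ℝ)^(-((3:ℝ)/2)) by positivity) ha)]
  have hF3 : 3*ρ*E ≤ (3/(2*b))*(a*T) := by rw [← henergy]; exact energy_upper hε ha hb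
  have hF4 : (3/4)*((3/(2*b))*(a*T)) ≤ 3*ρ*E := by
    have hj := jensen_energy hε ha hb
    rw [henergy] at hj
    refine le_trans ?_ hj
    rw [le_div_iff₀ (by positivity)]
    have hApos : (0:ℝ) < (3/(2*b))*(a*T) := by positivity
    nlinarith [mul_pos hε (mul_pos (show (0:ℝ) < (2:ℝ)^(-((5:ℝ)/2)) by positivity) ha)]
  -- clear denominators
  have hb2 : (0:ℝ) < 2*b := by positivity
  have hF3' : (2*b)*(3*ρ*E) ≤ 3*(a*T) := by
    calc (2*b)*(3*ρ*E) ≤ (2*b)*((3/(2*b))*(a*T)) := mul_le_mul_of_nonneg_left hF3 hb2.le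
      _ = 3*(a*T) := by field_simp
  have hF4' : (9/4)*(a*T) ≤ (2*b)*(3*ρ*E) := by
    calc (9/4)*(a*T) = (2*b)*((3/4)*((3/(2*b))*(a*T))) := by field_simp; ring
      _ ≤ (2*b)*(3*ρ*E) := mul_le_mul_of_nonneg_left hF4 hb2.le
  -- bounds on b*E
  have hbE1 : 6*b*E ≤ 5 := by
    have h : (6*b*E)*ρ ≤ 5*ρ := by nlinarith
    exact le_of_mul_le_mul_right (by linarith [h]) hρ
  have hbE2 : 3 ≤ 8*b*E := by
    have h : 3*ρ ≤ (8*b*E)*ρ := by nlinarith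
    exact le_of_mul_le_mul_right (by linarith [h]) hρ
  constructor
  · constructor
    · rw [le_div_iff₀ (by positivity)]; nlinarith
    · rw [div_le_iff₀ (by positivity)]; nlinarith
  -- second part
  have hA0 : 0 < (2*π*E) ^ ((3:ℝ)/2) := rpow_pos_of_pos (by positivity) _
  have h2πE_up : 2*π*E ≤ (5/3)*(π/b) := by
    rw [show (5/3:ℝ)*(π/b) = 5*π/(3*b) by ring, le_div_iff₀ (by positivity)]
    nlinarith [mul_le_mul_of_nonneg_right hbE1 hπ.le]
  have h2πE_low : (3/4)*(π/b) ≤ 2*π*E := by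
    rw [show (3/4:ℝ)*(π/b) = 3*π/(4*b) by ring, div_le_iff₀ (by positivity)]
    nlinarith [mul_le_mul_of_nonneg_right hbE2 hπ.le]
  have hA_up : (2*π*E) ^ ((3:ℝ)/2) ≤ (5/3:ℝ)^((3:ℝ)/2) * T := by
    rw [hT, ← mul_rpow (by norm_num) (by positivity)]
    exact rpow_le_rpow (by positivity) h2πE_up (by norm_num)
  have hA_low : (3/4:ℝ)^((3:ℝ)/2) * T ≤ (2*π*E) ^ ((3:ℝ)/2) := by
    rw [hT, ← mul_rpow (by norm_num) (by positivity)]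
    exact rpow_le_rpow (by positivity) h2πE_low (by norm_num)
  constructor
  · rw [le_div_iff₀ hA0]
    have key2 : (3/5:ℝ)^((5:ℝ)/2) = (3/5) * (3/5:ℝ)^((3:ℝ)/2) := by
      rw [show (5:ℝ)/2 = 1 + 3/2 by norm_num, rpow_add (by norm_num), rpow_one]
    have key3 : (3/5:ℝ)^((3:ℝ)/2) * (5/3:ℝ)^((3:ℝ)/2) = 1 := by
      rw [← mul_rpow (by norm_num) (by norm_num), show (3/5:ℝ)*(5/3) = 1 by norm_num, one_rpow]
    calc (3/5:ℝ)^((5:ℝ)/2) * a * (2*π*E) ^ ((3:ℝ)/2)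
        ≤ (3/5:ℝ)^((5:ℝ)/2) * a * ((5/3:ℝ)^((3:ℝ)/2) * T) := by
          refine mul_le_mul_of_nonneg_left hA_up (by positivity)
      _ = ((3/5:ℝ)^((3:ℝ)/2) * (5/3:ℝ)^((3:ℝ)/2)) * ((3/5)*(a*T)) := by rw [key2]; ring
      _ = (3/5)*(a*T) := by rw [key3, one_mul]
      _ ≤ ρ := hF2
  · rw [div_le_iff₀ hA0]
    have key4 : (4/3:ℝ)^((3:ℝ)/2) * (3/4:ℝ)^((3:ℝ)/2) = 1 := by
      rw [← mul_rpow (by norm_num) (by norm_num), show (4/3:ℝ)*(3/4) = 1 by norm_num, one_rpow]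
    calc ρ ≤ a*T := hF1
      _ = ((4/3:ℝ)^((3:ℝ)/2) * (3/4:ℝ)^((3:ℝ)/2)) * (a*T) := by rw [key4, one_mul]
      _ = (4/3:ℝ)^((3:ℝ)/2) * a * ((3/4:ℝ)^((3:ℝ)/2) * T) := by ring
      _ ≤ (4/3:ℝ)^((3:ℝ)/2) * a * ((2*π*E) ^ ((3:ℝ)/2)) := by
          refine mul_le_mul_of_nonneg_left hA_low (by positivity)

end
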